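/- Let σ ∈ (0,1), a ∈ ℝ, and let n ≥ 1 be an integer. Define β(θ) = −2aσ(2σ − (1+σ²)cos θ)/(1 + σ² − 2σ cos θ)². Then ∫₀^{2π} β(θ) cos(nθ) dθ = 2π a n σⁿ, and ∫₀^{2π} β(θ) sin(nθ) dθ = 0. -/

import Mathlib

open MeasureTheory intervalIntegral

lemma hasSumK (σ : ℝ) (h0 : 0 < σ) (h1 : σ < 1) (θ : ℝ) :
    HasSum (fun k : ℕ => (k:ℝ) * σ^k * Real.cos (k*θ))
      (σ*((1+σ^2)*Real.cos θ - 2*σ)/(1+σ^2-2*σ*Real.cos θ)^2) := by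
  set z : ℂ := (σ:ℂ) * Complex.exp (θ * Complex.I) with hzdef
  have hre : z.re = σ * Real.cos θ := by
    simp [z, Complex.exp_ofReal_mul_I_re]
  have him : z.im = σ * Real.sin θ := by
    simp [z, Complex.exp_ofReal_mul_I_im]
  have hz : ‖z‖ < 1 := by
    rw [hzdef, norm_mul, Complex.norm_real, Real.norm_eq_abs,
      Complex.norm_exp_ofReal_mul_I, mul_one, abs_of_pos h0]
    exact h1
  have H := hasSum_coe_mul_geometric_of_norm_lt_one (𝕜 := ℂ) hz
  have H2 := H.mapL Complex.reCLM
  have hpyth := Real.sin_sq_add_cos_sq θ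
  have hns : Complex.normSq (1 - z) = 1 + σ^2 - 2*σ*Real.cos θ := by
    rw [Complex.normSq_apply]
    simp only [Complex.sub_re, Complex.sub_im, Complex.one_re, Complex.one_im, hre, him]
    nlinarith [hpyth]
  have h1z : (1:ℂ) - z ≠ 0 := by
    intro h
    have h' : (1:ℂ) = z := by linear_combination h
    rw [← h'] at hz
    simp at hz
  have hconj : (starRingEnd ℂ) (1 - z) ≠ 0 := (map_ne_zero (starRingEnd ℂ)).mpr h1z
  have hd2 : ((Complex.normSq (1-z) : ℝ) : ℂ) = (1-z) * (starRingEnd ℂ) (1-z) :=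
    (Complex.mul_conj _).symm
  have hval : (z / (1 - z)^2) = (z * ((starRingEnd ℂ) (1 - z))^2) / ((Complex.normSq (1-z) : ℝ) : ℂ)^2 := by
    rw [div_eq_div_iff (pow_ne_zero 2 h1z)
      (by rw [hd2]; exact pow_ne_zero 2 (mul_ne_zero h1z hconj))]
    rw [hd2]; ring
  have hzz : z * (starRingEnd ℂ) z = ((σ^2:ℝ):ℂ) := by
    rw [Complex.mul_conj]
    norm_cast
    rw [Complex.normSq_apply, hre, him]
    nlinarith [hpyth]
  have hnum : z * ((starRingEnd ℂ) (1-z))^2 = z - 2*((σ^2:ℝ):ℂ) + ((σ^2:ℝ):ℂ) * (starRingEnd ℂ) z := by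
    have hc : (starRingEnd ℂ) (1 - z) = 1 - (starRingEnd ℂ) z := by rw [map_sub, map_one]
    rw [hc]
    linear_combination ((starRingEnd ℂ) z - 2) * hzz
  have hreval : (z / (1-z)^2).re = (σ*((1+σ^2)*Real.cos θ - 2*σ))/(1+σ^2-2*σ*Real.cos θ)^2 := by
    rw [hval, show (((Complex.normSq (1-z) : ℝ)) : ℂ)^2 = (((Complex.normSq (1-z))^2 : ℝ) : ℂ) by
      push_cast; ring, Complex.div_ofReal_re, hns, hnum]
    have : (z - 2*((σ^2:ℝ):ℂ) + ((σ^2:ℝ):ℂ) * (starRingEnd ℂ) z).re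
        = σ * Real.cos θ - 2*σ^2 + σ^2 * (σ * Real.cos θ) := by
      simp only [Complex.add_re, Complex.sub_re, Complex.mul_re, Complex.ofReal_re,
        Complex.ofReal_im, Complex.conj_re, Complex.conj_im, Complex.re_ofNat, Complex.im_ofNat, hre, him]
      ring
    rw [this]
    congr 1
    ring
  have hterm : ∀ b : ℕ, ((b:ℂ) * z^b).re = (b:ℝ) * σ^b * Real.cos (b*θ) := by
    intro b
    rw [hzdef, mul_pow, ← Complex.ofReal_pow, ← Complex.exp_nat_mul,
      show ((b:ℂ)) * ((θ:ℂ) * Complex.I) = ((b*θ:ℝ):ℂ) * Complex.I by push_cast; ring,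
      show ((b:ℂ)) * (((σ^b:ℝ):ℂ) * Complex.exp (((b*θ:ℝ):ℂ) * Complex.I))
        = (((b*σ^b:ℝ)):ℂ) * Complex.exp (((b*θ:ℝ):ℂ) * Complex.I) by push_cast; ring,
      Complex.re_ofReal_mul, Complex.exp_ofReal_mul_I_re]
  have heq : (fun b : ℕ => (b:ℝ) * σ^b * Real.cos (b*θ))
      = fun b : ℕ => Complex.reCLM ((b:ℂ) * z^b) := by
    funext b
    simp only [Complex.reCLM_apply]
    exact (hterm b).symm
  have : HasSum (fun b : ℕ => (b:ℝ) * σ^b * Real.cos (b*θ)) ((z/(1-z)^2).re) := by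
    rw [heq]; exact H2
  rwa [hreval] at this


lemma int_cos_int (m : ℤ) (hm : m ≠ 0) :
    ∫ x in (0:ℝ)..(2*Real.pi), Real.cos (m*x) = 0 := by
  have hm' : (m:ℝ) ≠ 0 := Int.cast_ne_zero.mpr hm
  rw [intervalIntegral.integral_comp_mul_left Real.cos hm', integral_cos, mul_zero,
    Real.sin_zero, sub_zero, show (m:ℝ)*(2*Real.pi) = ((2*m:ℤ):ℝ)*Real.pi by push_cast; ring,
    Real.sin_int_mul_pi, smul_zero]

lemma int_sin_int (m : ℤ) :
    ∫ x in (0:ℝ)..(2*Real.pi), Real.sin (m*x) = 0 := by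
  rcases eq_or_ne m 0 with h | h
  · simp [h]
  have hm' : (m:ℝ) ≠ 0 := Int.cast_ne_zero.mpr h
  rw [intervalIntegral.integral_comp_mul_left Real.sin hm', integral_sin, mul_zero,
    Real.cos_zero, Real.cos_int_mul_two_pi, sub_self, smul_zero]

lemma orth_cc (k n : ℕ) (hn : 1 ≤ n) :
    ∫ x in (0:ℝ)..(2*Real.pi), Real.cos (k*x) * Real.cos (n*x)
      = if k = n then Real.pi else 0 := by
  set m1 : ℤ := (k:ℤ) - n with hm1
  set m2 : ℤ := (k:ℤ) + n with hm2
  have hid : ∀ x : ℝ, Real.cos (k*x) * Real.cos (n*x)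
      = (Real.cos ((m1:ℝ)*x) + Real.cos ((m2:ℝ)*x))/2 := by
    intro x
    rw [hm1, hm2]
    push_cast
    rw [sub_mul, add_mul, Real.cos_sub, Real.cos_add]
    ring
  simp only [hid]
  have hi1 : IntervalIntegrable (fun x => Real.cos ((m1:ℝ)*x)) volume 0 (2*Real.pi) :=
    (Real.continuous_cos.comp (continuous_const.mul continuous_id)).intervalIntegrable _ _
  have hi2 : IntervalIntegrable (fun x => Real.cos ((m2:ℝ)*x)) volume 0 (2*Real.pi) :=
    (Real.continuous_cos.comp (continuous_const.mul continuous_id)).intervalIntegrable _ _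
  rw [intervalIntegral.integral_div, intervalIntegral.integral_add hi1 hi2,
    int_cos_int m2 (by omega)]
  rcases eq_or_ne k n with h | h
  · have : m1 = 0 := by omega
    rw [this]
    simp only [Int.cast_zero, zero_mul, Real.cos_zero, if_pos h]
    rw [intervalIntegral.integral_const]
    simp
  · rw [int_cos_int m1 (by omega), if_neg h]
    simp

lemma orth_cs (k n : ℕ) :
    ∫ x in (0:ℝ)..(2*Real.pi), Real.cos (k*x) * Real.sin (n*x) = 0 := by
  set m1 : ℤ := (n:ℤ) + k with hm1
  set m2 : ℤ := (n:ℤ) - k with hm2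
  have hid : ∀ x : ℝ, Real.cos (k*x) * Real.sin (n*x)
      = (Real.sin ((m1:ℝ)*x) + Real.sin ((m2:ℝ)*x))/2 := by
    intro x
    rw [hm1, hm2]
    push_cast
    rw [add_mul, sub_mul, Real.sin_add, Real.sin_sub]
    ring
  simp only [hid]
  have hi1 : IntervalIntegrable (fun x => Real.sin ((m1:ℝ)*x)) volume 0 (2*Real.pi) :=
    (Real.continuous_sin.comp (continuous_const.mul continuous_id)).intervalIntegrable _ _
  have hi2 : IntervalIntegrable (fun x => Real.sin ((m2:ℝ)*x)) volume 0 (2*Real.pi) :=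
    (Real.continuous_sin.comp (continuous_const.mul continuous_id)).intervalIntegrable _ _
  rw [intervalIntegral.integral_div, intervalIntegral.integral_add hi1 hi2,
    int_sin_int m1, int_sin_int m2]
  simp

lemma swapKey (σ : ℝ) (h0 : 0 < σ) (h1 : σ < 1) (g : ℝ → ℝ) (hg : Continuous g)
    (hgb : ∀ θ, |g θ| ≤ 1) :
    ∫ θ in (0:ℝ)..(2*Real.pi), (σ*((1+σ^2)*Real.cos θ - 2*σ)/(1+σ^2-2*σ*Real.cos θ)^2) * g θ
      = ∑' k : ℕ, ((k:ℝ) * σ^k) * ∫ θ in (0:ℝ)..(2*Real.pi), Real.cos (k*θ) * g θ := by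
  have h2pi : (0:ℝ) ≤ 2*Real.pi := by positivity
  set F : ℕ → ℝ → ℝ := fun k θ => ((k:ℝ) * σ^k * Real.cos (k*θ)) * g θ with hF
  have hFc : ∀ k, Continuous (F k) := fun k =>
    ((continuous_const.mul (Real.continuous_cos.comp (continuous_const.mul continuous_id))).mul hg)
  have hFint : ∀ k, Integrable (F k) (volume.restrict (Set.Ioc (0:ℝ) (2*Real.pi))) := fun k =>
    ((hFc k).integrableOn_Ioc)
  have hksum : Summable (fun k : ℕ => (k:ℝ) * σ^k * (2*Real.pi)) := by
    apply Summable.mul_right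
    have := (hasSumK σ h0 h1 0).summable
    simpa using this
  have hFbound : ∀ k θ, ‖F k θ‖ ≤ (k:ℝ) * σ^k := by
    intro k θ
    rw [hF]
    simp only [Real.norm_eq_abs, abs_mul]
    have h1' : |(k:ℝ)| = (k:ℝ) := abs_of_nonneg (Nat.cast_nonneg k)
    have h2' : |σ^k| = σ^k := abs_of_nonneg (pow_nonneg h0.le k)
    rw [h1', h2']
    have hc := Real.abs_cos_le_one ((k:ℝ)*θ)
    have hgθ := hgb θ
    have hc0 := abs_nonneg (Real.cos ((k:ℝ)*θ))
    have hg0 := abs_nonneg (g θ)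
    have hk0 : (0:ℝ) ≤ (k:ℝ) * σ^k := by positivity
    have hcg : |Real.cos ((k:ℝ)*θ)| * |g θ| ≤ 1 := mul_le_one₀ hc hg0 hgθ
    nlinarith [mul_le_mul_of_nonneg_left hcg hk0]
  have hFsum : Summable (fun k : ℕ => ∫ θ in Set.Ioc (0:ℝ) (2*Real.pi), ‖F k θ‖) := by
    apply Summable.of_nonneg_of_le (fun k => integral_nonneg (fun θ => norm_nonneg _)) _ hksum
    intro k
    calc (∫ θ in Set.Ioc (0:ℝ) (2*Real.pi), ‖F k θ‖)
        ≤ ∫ _ in Set.Ioc (0:ℝ) (2*Real.pi), (k:ℝ) * σ^k := by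
          apply setIntegral_mono_on ((hFint k).norm) (integrable_const _)
            measurableSet_Ioc
          exact fun θ _ => hFbound k θ
      _ = (k:ℝ) * σ^k * (2*Real.pi) := by
          rw [setIntegral_const]
          simp [Real.volume_Ioc, ENNReal.toReal_ofReal h2pi]
          rw [max_eq_left (by positivity)]
          ring
  have hswap := MeasureTheory.integral_tsum_of_summable_integral_norm hFint hFsum
  have hpt : ∀ θ : ℝ, (∑' k : ℕ, F k θ)
      = (σ*((1+σ^2)*Real.cos θ - 2*σ)/(1+σ^2-2*σ*Real.cos θ)^2) * g θ := fun θ =>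
    ((hasSumK σ h0 h1 θ).mul_right (g θ)).tsum_eq
  rw [intervalIntegral.integral_of_le h2pi]
  rw [show (fun θ => (σ*((1+σ^2)*Real.cos θ - 2*σ)/(1+σ^2-2*σ*Real.cos θ)^2) * g θ)
      = fun θ => ∑' k : ℕ, F k θ from funext fun θ => (hpt θ).symm]
  rw [← hswap]
  apply tsum_congr
  intro k
  rw [← intervalIntegral.integral_of_le h2pi, ← intervalIntegral.integral_const_mul]
  apply intervalIntegral.integral_congr
  intro θ _
  rw [hF]
  ring

/-- For `σ ∈ (0,1)`, `a ∈ ℝ`, `n ≥ 1`, and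
`β(θ) = −2aσ(2σ − (1+σ²)cos θ)/(1 + σ² − 2σ cos θ)²`, one has
`∫₀^{2Real.pi} β(θ) cos(nθ) dθ = 2Real.pi a n σⁿ` and `∫₀^{2Real.pi} β(θ) sin(nθ) dθ = 0`. -/
theorem stmt_16 (σ a : ℝ) (hσ : σ ∈ Set.Ioo (0:ℝ) 1) (n : ℕ) (hn : 1 ≤ n) :
    (∫ θ in (0:ℝ)..(2 * Real.pi),
        (-(2 * a * σ) * (2 * σ - (1 + σ ^ 2) * Real.cos θ)
            / (1 + σ ^ 2 - 2 * σ * Real.cos θ) ^ 2) * Real.cos (n * θ))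
      = 2 * Real.pi * a * n * σ ^ n ∧
    (∫ θ in (0:ℝ)..(2 * Real.pi),
        (-(2 * a * σ) * (2 * σ - (1 + σ ^ 2) * Real.cos θ)
            / (1 + σ ^ 2 - 2 * σ * Real.cos θ) ^ 2) * Real.sin (n * θ)) = 0 := by
  obtain ⟨h0, h1⟩ := hσ
  have hK : ∀ g : ℝ → ℝ, (∀ θ, |g θ| ≤ 1) →
      (fun θ => (-(2 * a * σ) * (2 * σ - (1 + σ ^ 2) * Real.cos θ)
          / (1 + σ ^ 2 - 2 * σ * Real.cos θ) ^ 2) * g θ)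
      = fun θ => (2*a) * ((σ*((1+σ^2)*Real.cos θ - 2*σ)/(1+σ^2-2*σ*Real.cos θ)^2) * g θ) := by
    intro g _
    funext θ
    ring
  constructor
  · rw [hK _ (fun θ => Real.abs_cos_le_one _), intervalIntegral.integral_const_mul,
      swapKey σ h0 h1 (fun θ => Real.cos ((n:ℝ)*θ)) (by fun_prop)
        (fun θ => Real.abs_cos_le_one _)]
    have hts : ∑' k : ℕ, ((k:ℝ) * σ^k) * ∫ θ in (0:ℝ)..(2*Real.pi), Real.cos (k*θ) * Real.cos (n*θ)
        = (n:ℝ) * σ^n * Real.pi := by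
      have h1t : ∀ k : ℕ, ((k:ℝ) * σ^k) * (∫ θ in (0:ℝ)..(2*Real.pi), Real.cos (k*θ) * Real.cos (n*θ))
          = if k = n then (n:ℝ) * σ^n * Real.pi else 0 := by
        intro k
        rw [orth_cc k n hn]
        rcases eq_or_ne k n with h | h
        · simp [h]
        · simp [h]
      simp only [h1t]
      exact tsum_ite_eq n _
    rw [hts]
    ring
  · rw [hK _ (fun θ => Real.abs_sin_le_one _), intervalIntegral.integral_const_mul,
      swapKey σ h0 h1 (fun θ => Real.sin ((n:ℝ)*θ)) (by fun_prop)
        (fun θ => Real.abs_sin_le_one _)]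
    have hts : ∑' k : ℕ, ((k:ℝ) * σ^k) * ∫ θ in (0:ℝ)..(2*Real.pi), Real.cos (k*θ) * Real.sin (n*θ)
        = 0 := by
      have h1t : ∀ k : ℕ, ((k:ℝ) * σ^k) * (∫ θ in (0:ℝ)..(2*Real.pi), Real.cos (k*θ) * Real.sin (n*θ)) = 0 := by
        intro k
        rw [orth_cs k n]
        ring
      simp only [h1t]
      exact tsum_zero
    rw [hts]
    ring
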